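/- Let N ⊴ G be invariant under endomorphisms φ, ψ of a group G, with G/N finitely generated abelian. If R(φ,ψ) is finite, then Coin(φ̄,ψ̄) is finite, R(φ̄,ψ̄) is finite, and R(φ|_N,ψ|_N) is finite. -/

import Mathlib

/-- The (φ,ψ)-twisted conjugacy relation. -/
def twistRel {G : Type*} [Group G] (φ ψ : G →* G) : G → G → Prop :=
  fun a b => ∃ h : G, a = ψ h * b * (φ h)⁻¹

lemma twistRel_equivalence {G : Type*} [Group G] (φ ψ : G →* G) :
    Equivalence (twistRel φ ψ) := by
  constructor
  · intro a; exact ⟨1, by simp⟩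
  · rintro a b ⟨h, rfl⟩
    exact ⟨h⁻¹, by simp [map_inv, mul_assoc]⟩
  · rintro a b c ⟨h, rfl⟩ ⟨k, rfl⟩
    exact ⟨h * k, by simp [map_mul, mul_assoc]⟩

lemma aux_ker_finite {Q : Type*} [CommGroup Q] [Group.FG Q] (θ : Q →* Q)
    (h : Finite ((Additive Q) ⧸ LinearMap.range (MonoidHom.toAdditive θ).toIntLinearMap)) :
    Finite {x : Q // θ x = 1} := by
  set θ' := (MonoidHom.toAdditive θ).toIntLinearMap with hθ'
  haveI : Module.Finite ℤ (Additive Q) :=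
    Module.Finite.iff_addGroup_fg.mpr inferInstance
  have htor : Module.IsTorsion ℤ ((Additive Q) ⧸ LinearMap.range θ') :=
    AddMonoid.isTorsion_iff_isTorsion_int.mp is_add_torsion_of_finite
  have h0 : Module.rank ℤ ((Additive Q) ⧸ LinearMap.range θ') = 0 :=
    rank_eq_zero_iff_isTorsion.mpr htor
  have h1 := rank_quotient_add_rank_of_isDomain (R := ℤ) (LinearMap.range θ')
  have h2 := rank_quotient_add_rank_of_isDomain (R := ℤ) (LinearMap.ker θ')
  have h3 : Module.rank ℤ ((Additive Q) ⧸ LinearMap.ker θ')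
      = Module.rank ℤ (LinearMap.range θ') :=
    (LinearMap.quotKerEquivRange θ').rank_eq
  have hA : Module.rank ℤ (Additive Q) < Cardinal.aleph0 := Module.rank_lt_aleph0 ℤ (Additive Q)
  have hker0 : Module.rank ℤ (LinearMap.ker θ') = 0 := by
    rw [h0, zero_add] at h1
    rw [h3, h1] at h2
    have heq : Module.rank ℤ (Additive Q) + Module.rank ℤ (LinearMap.ker θ')
        = Module.rank ℤ (Additive Q) + 0 := by rw [add_zero]; exact h2
    exact Cardinal.eq_of_add_eq_add_left heq hA
  have htor' : Module.IsTorsion ℤ (LinearMap.ker θ') :=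
    rank_eq_zero_iff_isTorsion.mp hker0
  haveI : IsNoetherian ℤ (Additive Q) := inferInstance
  haveI : Module.Finite ℤ (LinearMap.ker θ') :=
    Module.Finite.iff_fg.mpr (IsNoetherian.noetherian _)
  have hfin : Finite (LinearMap.ker θ') := Module.finite_of_fg_torsion _ htor'
  have mem : ∀ x : {x : Q // θ x = 1}, Additive.ofMul x.1 ∈ LinearMap.ker θ' := by
    intro x
    exact LinearMap.mem_ker.mpr (congrArg Additive.ofMul x.2)
  refine Finite.of_injective
    (fun x : {x : Q // θ x = 1} =>
      (⟨Additive.ofMul x.1, mem x⟩ : LinearMap.ker θ')) ?_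
  · intro a b hab
    have := congrArg (fun y : LinearMap.ker θ' => Additive.toMul y.1) hab
    exact Subtype.ext (by simpa using this)


/-- if N ⊴ G is (φ,ψ)-invariant with G/N finitely generated abelian and
    R(φ,ψ) < ∞, then Coin(φ̄,ψ̄), R(φ̄,ψ̄) and R(φ|_N,ψ|_N) are all finite. -/
theorem reidNr_finite_consequences {G : Type*} [Group G] (N : Subgroup G) [N.Normal]
    (φ ψ : G →* G) (hφ : N ≤ N.comap φ) (hψ : N ≤ N.comap ψ)
    (hab : ∀ x y : G ⧸ N, x * y = y * x) (hfg : Group.FG (G ⧸ N))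
    (hR : Finite (Quot (twistRel φ ψ))) :
    Finite {x : G ⧸ N // QuotientGroup.map N N φ hφ x = QuotientGroup.map N N ψ hψ x} ∧
    Finite (Quot (twistRel (QuotientGroup.map N N φ hφ) (QuotientGroup.map N N ψ hψ))) ∧
    Finite (Quot (twistRel
      ((φ.domRestrict N).codRestrict N (fun x => hφ x.2))
      ((ψ.domRestrict N).codRestrict N (fun x => hψ x.2)))) := by
  classical
  haveI := hfg
  set φb := QuotientGroup.map N N φ hφ with hφb
  set ψb := QuotientGroup.map N N ψ hψ with hψb
  -- Part 2 : R(φ̄, ψ̄) finite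
  have hsur2 : Function.Surjective
      (Quot.map (QuotientGroup.mk : G → G ⧸ N)
        (by rintro a b ⟨h, rfl⟩
            exact ⟨QuotientGroup.mk h, by simp [hφb, hψb, QuotientGroup.map_mk]⟩) :
        Quot (twistRel φ ψ) → Quot (twistRel φb ψb)) := by
    intro q
    obtain ⟨x, rfl⟩ := Quot.exists_rep q
    obtain ⟨g, rfl⟩ := QuotientGroup.mk_surjective x
    exact ⟨Quot.mk _ g, rfl⟩
  have h2 : Finite (Quot (twistRel φb ψb)) := Finite.of_surjective _ hsur2
  -- commutative group structure on the quotient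
  letI cg : CommGroup (G ⧸ N) := { (inferInstance : Group (G ⧸ N)) with mul_comm := hab }
  set θ : (G ⧸ N) →* (G ⧸ N) := ψb / φb with hθ
  have hθapp : ∀ x, θ x = ψb x * (φb x)⁻¹ := by
    intro x; rw [hθ, MonoidHom.div_apply, div_eq_mul_inv]
  -- finiteness of the cokernel of θ (as a ℤ-module quotient)
  have hcok : Finite ((Additive (G ⧸ N)) ⧸
      LinearMap.range (MonoidHom.toAdditive θ).toIntLinearMap) := by
    set Rng := LinearMap.range (MonoidHom.toAdditive θ).toIntLinearMap
    have compat : ∀ a b : G ⧸ N, twistRel φb ψb a b →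
        (Submodule.Quotient.mk (Additive.ofMul a) : _ ⧸ Rng) =
          Submodule.Quotient.mk (Additive.ofMul b) := by
      rintro a b ⟨h, rfl⟩
      rw [Submodule.Quotient.eq]
      refine ⟨Additive.ofMul h, ?_⟩
      have : (MonoidHom.toAdditive θ).toIntLinearMap (Additive.ofMul h)
          = Additive.ofMul (θ h) := rfl
      rw [this]
      have : ψb h * b * (φb h)⁻¹ / b = θ h := by
        rw [hθapp]
        simp [div_eq_mul_inv, mul_comm, mul_assoc, mul_left_comm]
      calc Additive.ofMul (θ h) = Additive.ofMul (ψb h * b * (φb h)⁻¹ / b) := by rw [this]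
        _ = Additive.ofMul (ψb h * b * (φb h)⁻¹) - Additive.ofMul b := by
            exact ofMul_div _ _
    have hsur : Function.Surjective
        (Quot.lift (fun a : G ⧸ N => (Submodule.Quotient.mk (Additive.ofMul a) : _ ⧸ Rng))
          compat) := by
      intro y
      obtain ⟨a, rfl⟩ := Submodule.Quotient.mk_surjective _ y
      exact ⟨Quot.mk _ (Additive.toMul a), rfl⟩
    exact Finite.of_surjective _ hsur
  have h1' : Finite {x : G ⧸ N // θ x = 1} := aux_ker_finite θ hcok
  have h1 : Finite {x : G ⧸ N // φb x = ψb x} := by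
    exact Finite.of_equiv {x : G ⧸ N // θ x = 1}
      (Equiv.subtypeEquivRight (fun x => by rw [hθapp, mul_inv_eq_one, eq_comm]))
  refine ⟨h1, h2, ?_⟩
  -- Part 3 : R(φ|N, ψ|N) finite
  set φN := (φ.domRestrict N).codRestrict N (fun x => hφ x.2) with hφN
  set ψN := (ψ.domRestrict N).codRestrict N (fun x => hψ x.2) with hψN
  set C := {x : G ⧸ N // φb x = ψb x} with hC
  haveI : Finite C := h1
  let s : Quot (twistRel φ ψ) → ↥N := fun q =>
    if hq : ∃ n : ↥N, Quot.mk (twistRel φ ψ) ↑n = q then hq.choose else 1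
  have hs : ∀ (q : Quot (twistRel φ ψ)) (hq : ∃ n : ↥N, Quot.mk (twistRel φ ψ) ↑n = q),
      Quot.mk (twistRel φ ψ) (↑(s q) : G) = q := by
    intro q hq
    simp only [s, dif_pos hq]
    exact hq.choose_spec
  let lft : C → G := fun c => (QuotientGroup.mk_surjective c.1).choose
  have hlft : ∀ c : C, (QuotientGroup.mk (lft c) : G ⧸ N) = c.1 := fun c =>
    (QuotientGroup.mk_surjective c.1).choose_spec
  have hmemN : ∀ (q : Quot (twistRel φ ψ)) (c : C),
      ψ (lft c) * ↑(s q) * (φ (lft c))⁻¹ ∈ N := by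
    intro q c
    rw [← QuotientGroup.eq_one_iff]
    have h1q : ((↑(s q) : G) : G ⧸ N) = 1 := (QuotientGroup.eq_one_iff _).mpr (s q).2
    have he : (QuotientGroup.mk (ψ (lft c) * ↑(s q) * (φ (lft c))⁻¹) : G ⧸ N)
        = ψb c.1 * ((↑(s q) : G) : G ⧸ N) * (φb c.1)⁻¹ := by
      rw [← hlft c]
      simp [hφb, hψb, QuotientGroup.map_mk]
    rw [he, h1q, mul_one, ← c.2, mul_inv_cancel]
  let F : Quot (twistRel φ ψ) × C → Quot (twistRel φN ψN) := fun p =>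
    Quot.mk _ ⟨ψ (lft p.2) * ↑(s p.1) * (φ (lft p.2))⁻¹, hmemN p.1 p.2⟩
  have hFsur : Function.Surjective F := by
    intro k
    obtain ⟨n', rfl⟩ := Quot.exists_rep k
    set nq := s (Quot.mk (twistRel φ ψ) ↑n') with hnq
    have hq : ∃ n : ↥N, Quot.mk (twistRel φ ψ) (↑n : G) = Quot.mk (twistRel φ ψ) ↑n' :=
      ⟨n', rfl⟩
    have hrel : twistRel φ ψ (↑n' : G) ↑nq :=
      (twistRel_equivalence φ ψ).symm
        (((twistRel_equivalence φ ψ).eqvGen_iff).mp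
          (Quot.eq.mp (hs (Quot.mk (twistRel φ ψ) ↑n') hq)))
    obtain ⟨g, hg⟩ := hrel
    have h1q : ((↑nq : G) : G ⧸ N) = 1 :=
      (QuotientGroup.eq_one_iff _).mpr nq.2
    have h2q : ((↑n' : G) : G ⧸ N) = 1 := (QuotientGroup.eq_one_iff _).mpr n'.2
    have hcg : φb (QuotientGroup.mk g) = ψb (QuotientGroup.mk g) := by
      have e := congrArg (QuotientGroup.mk (s := N)) hg
      rw [QuotientGroup.mk_mul, QuotientGroup.mk_mul, QuotientGroup.mk_inv, h1q, h2q] at e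
      rw [hφb, hψb]
      simp only [QuotientGroup.map_mk]
      rw [mul_one, eq_comm, mul_inv_eq_one, eq_comm] at e
      exact e
    set c : C := ⟨QuotientGroup.mk g, hcg⟩ with hc
    refine ⟨(Quot.mk (twistRel φ ψ) ↑n', c), ?_⟩
    apply Quot.sound
    have hu : lft c * g⁻¹ ∈ N := by
      rw [← QuotientGroup.eq_one_iff, QuotientGroup.mk_mul, QuotientGroup.mk_inv, hlft c]
      simp [hc]
    refine ⟨⟨lft c * g⁻¹, hu⟩, ?_⟩
    apply Subtype.ext
    simp only [hφN, hψN, Subgroup.coe_mul, Subgroup.coe_inv,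
      MonoidHom.codRestrict_apply, MonoidHom.domRestrict_apply]
    rw [← hnq, hg]
    simp [map_mul, map_inv, mul_assoc]
    show ψ (lft c) * (↑nq * (φ (lft c))⁻¹) =
      ψ (lft c * g⁻¹) * (ψ g * (↑nq * ((φ g)⁻¹ * (φ (lft c * g⁻¹))⁻¹)))
    simp [map_mul, map_inv, mul_assoc]
  exact Finite.of_surjective F hFsur
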